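/- arXiv:1410.1036 — 2 statements merged into one kernel-verified Lean document; each statement's English description precedes it below -/
import Mathlib

section
/- For points p ≠ q in 𝔹_d, the Klein bisector {x ∈ 𝔹_d : d^K(x,p) = d^K(x,q)} equals the intersection of 𝔹_d with an affine hyperplane, namely {x : ⟨x, p/√(1-⟨p,p⟩) - q/√(1-⟨q,q⟩)⟩ = 1/√(1-⟨p,p⟩) - 1/√(1-⟨q,q⟩)}. -/
open scoped RealInnerProductSpace

theorem klein_bisector_affine (d : ℕ) (p q : EuclideanSpace ℝ (Fin d))
    (hp : ⟪p, p⟫ < 1) (hq : ⟪q, q⟫ < 1) (hpq : p ≠ q) :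
    {x : EuclideanSpace ℝ (Fin d) | ⟪x, x⟫ < 1 ∧
        (1 - ⟪x, p⟫) / (Real.sqrt (1 - ⟪x, x⟫) * Real.sqrt (1 - ⟪p, p⟫)) =
          (1 - ⟪x, q⟫) / (Real.sqrt (1 - ⟪x, x⟫) * Real.sqrt (1 - ⟪q, q⟫))} =
      {x : EuclideanSpace ℝ (Fin d) | ⟪x, x⟫ < 1} ∩
        {x : EuclideanSpace ℝ (Fin d) |
          ⟪x, (Real.sqrt (1 - ⟪p, p⟫))⁻¹ • p - (Real.sqrt (1 - ⟪q, q⟫))⁻¹ • q⟫ =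
            (Real.sqrt (1 - ⟪p, p⟫))⁻¹ - (Real.sqrt (1 - ⟪q, q⟫))⁻¹} := by
  ext x
  simp only [Set.mem_setOf_eq, Set.mem_inter_iff]
  refine and_congr_right fun hx => ?_
  have ha : 0 < Real.sqrt (1 - ⟪x, x⟫) := Real.sqrt_pos.2 (by linarith)
  have hsp : 0 < Real.sqrt (1 - ⟪p, p⟫) := Real.sqrt_pos.2 (by linarith)
  have hsq : 0 < Real.sqrt (1 - ⟪q, q⟫) := Real.sqrt_pos.2 (by linarith)
  rw [inner_sub_right, real_inner_smul_right, real_inner_smul_right,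
    div_eq_div_iff (by positivity) (by positivity)]
  set A := ⟪x, p⟫
  set B := ⟪x, q⟫
  set a := Real.sqrt (1 - ⟪x, x⟫)
  set sp := Real.sqrt (1 - ⟪p, p⟫)
  set sq := Real.sqrt (1 - ⟪q, q⟫)
  rw [inv_eq_one_div, inv_eq_one_div]
  constructor
  · intro h
    have h' : (1 - A) * sq = (1 - B) * sp :=
      mul_left_cancel₀ ha.ne' (by linear_combination h)
    field_simp
    linear_combination -h'
  · intro h
    field_simp [ha.ne', hsp.ne', hsq.ne'] at h
    linear_combination (-a) * h
end

section
/- Fix distinct points p, q ∈ 𝔹_d. The halfspace {x ∈ 𝔹_d : d^K(x,p) ≤ d^K(x,q)} is convex (as a subset of ℝ^d): it is the intersection of the convex ball 𝔹_d with the affine halfspace {x : ⟨x, p/√(1-⟨p,p⟩) - q/√(1-⟨q,q⟩)⟩ ≥ 1/√(1-⟨p,p⟩) - 1/√(1-⟨q,q⟩)}. Hence every Klein Voronoi cell (finite intersection of such sets) is convex. -/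
open scoped RealInnerProductSpace

private lemma klein_aux (a b s A B : ℝ) (ha : 0 < a) (hb : 0 < b) (hs : 0 < s) :
    (1 - A) / (s * a) ≤ (1 - B) / (s * b) ↔ a⁻¹ - b⁻¹ ≤ a⁻¹ * A - b⁻¹ * B := by
  rw [div_le_div_iff₀ (by positivity) (by positivity), ← sub_nonneg,
    show (1 - B) * (s * a) - (1 - A) * (s * b)
      = ((a⁻¹ * A - b⁻¹ * B) - (a⁻¹ - b⁻¹)) * (s * a * b) by field_simp; ring,
    mul_nonneg_iff_of_pos_right (by positivity), sub_nonneg]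

theorem klein_halfspace_convex (d : ℕ) (p q : EuclideanSpace ℝ (Fin d))
    (hp : ⟪p, p⟫ < 1) (hq : ⟪q, q⟫ < 1) (hpq : p ≠ q) :
    ({x : EuclideanSpace ℝ (Fin d) | ⟪x, x⟫ < 1 ∧
        (1 - ⟪x, p⟫) / (Real.sqrt (1 - ⟪x, x⟫) * Real.sqrt (1 - ⟪p, p⟫)) ≤
          (1 - ⟪x, q⟫) / (Real.sqrt (1 - ⟪x, x⟫) * Real.sqrt (1 - ⟪q, q⟫))} =
      {x : EuclideanSpace ℝ (Fin d) | ⟪x, x⟫ < 1} ∩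
        {x : EuclideanSpace ℝ (Fin d) |
          (Real.sqrt (1 - ⟪p, p⟫))⁻¹ - (Real.sqrt (1 - ⟪q, q⟫))⁻¹ ≤
            ⟪x, (Real.sqrt (1 - ⟪p, p⟫))⁻¹ • p - (Real.sqrt (1 - ⟪q, q⟫))⁻¹ • q⟫}) ∧
    Convex ℝ {x : EuclideanSpace ℝ (Fin d) | ⟪x, x⟫ < 1 ∧
        (1 - ⟪x, p⟫) / (Real.sqrt (1 - ⟪x, x⟫) * Real.sqrt (1 - ⟪p, p⟫)) ≤
          (1 - ⟪x, q⟫) / (Real.sqrt (1 - ⟪x, x⟫) * Real.sqrt (1 - ⟪q, q⟫))} := by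
  have ha : 0 < Real.sqrt (1 - ⟪p, p⟫) := Real.sqrt_pos.2 (by linarith)
  have hb : 0 < Real.sqrt (1 - ⟪q, q⟫) := Real.sqrt_pos.2 (by linarith)
  have key : ({x : EuclideanSpace ℝ (Fin d) | ⟪x, x⟫ < 1 ∧
        (1 - ⟪x, p⟫) / (Real.sqrt (1 - ⟪x, x⟫) * Real.sqrt (1 - ⟪p, p⟫)) ≤
          (1 - ⟪x, q⟫) / (Real.sqrt (1 - ⟪x, x⟫) * Real.sqrt (1 - ⟪q, q⟫))} =
      {x : EuclideanSpace ℝ (Fin d) | ⟪x, x⟫ < 1} ∩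
        {x : EuclideanSpace ℝ (Fin d) |
          (Real.sqrt (1 - ⟪p, p⟫))⁻¹ - (Real.sqrt (1 - ⟪q, q⟫))⁻¹ ≤
            ⟪x, (Real.sqrt (1 - ⟪p, p⟫))⁻¹ • p - (Real.sqrt (1 - ⟪q, q⟫))⁻¹ • q⟫}) := by
    ext x
    simp only [Set.mem_setOf_eq, Set.mem_inter_iff]
    refine and_congr_right fun hx => ?_
    have hs : 0 < Real.sqrt (1 - ⟪x, x⟫) := Real.sqrt_pos.2 (by linarith)
    rw [inner_sub_right, real_inner_smul_right, real_inner_smul_right]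
    exact klein_aux _ _ _ _ _ ha hb hs
  refine ⟨key, ?_⟩
  rw [key]
  apply Convex.inter
  · have : {x : EuclideanSpace ℝ (Fin d) | ⟪x, x⟫ < 1} =
        Metric.ball (0 : EuclideanSpace ℝ (Fin d)) 1 := by
      ext x
      simp only [Set.mem_setOf_eq, Metric.mem_ball, dist_zero_right,
        real_inner_self_eq_norm_sq]
      rw [← abs_norm x, ← sq_abs, sq_lt_one_iff_abs_lt_one]
      simp [abs_abs, abs_norm]
 
    rw [this]
    exact convex_ball 0 1
  · exact convex_halfSpace_ge ⟨fun a b => by rw [inner_add_left],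
      fun c a => by rw [real_inner_smul_left, smul_eq_mul]⟩ _
end
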